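/- (The SR dynamics leaves the Wright manifold, even under weak selection) For every s ∈ (0,1) and every r ∈ (0,1), there exist n = m = 2, a fitness matrix W with w_{ij} ∈ [1−s, 1+s] for all i,j, and a product population distribution P (i.e. p_{ij} = x_i(P)·y_j(P) for all i,j), such that the SR update SR_r(P) is NOT a product distribution, i.e. there exist i,j with (SR_r(P))_{ij} ≠ (Σ_{j'} (SR_r(P))_{ij'})·(Σ_{i'} (SR_r(P))_{i'j}). -/

import Mathlib

open Finset

noncomputable section

/-- `P` is a population distribution: nonnegative entries summing to 1. -/
def IsPopDist {n m : ℕ} (P : Fin n → Fin m → ℝ) : Prop :=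
  (∀ i j, 0 ≤ P i j) ∧ (∑ i, ∑ j, P i j) = 1

/-- `W` is a fitness matrix: strictly positive entries. -/
def IsFitness {n m : ℕ} (W : Fin n → Fin m → ℝ) : Prop :=
  ∀ i j, 0 < W i j

/-- Average fitness w̄(P) = Σ_{i,j} p_{ij} w_{ij}. -/
def wbar {n m : ℕ} (W P : Fin n → Fin m → ℝ) : ℝ :=
  ∑ i, ∑ j, P i j * W i j

/-- First marginal x_i(P) = Σ_j p_{ij}. -/
def xmarg {n m : ℕ} (P : Fin n → Fin m → ℝ) (i : Fin n) : ℝ :=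
  ∑ j, P i j

/-- Second marginal y_j(P) = Σ_i p_{ij}. -/
def ymarg {n m : ℕ} (P : Fin n → Fin m → ℝ) (j : Fin m) : ℝ :=
  ∑ i, P i j

/-- Selection update p^S_{ij} = p_{ij} w_{ij} / w̄(P). -/
def pS {n m : ℕ} (W P : Fin n → Fin m → ℝ) (i : Fin n) (j : Fin m) : ℝ :=
  P i j * W i j / wbar W P

/-- Recombination-after-selection matrix
  p^{SR}_{ij} = (Σ_l p_{il} w_{il})(Σ_k p_{kj} w_{kj}) / w̄(P)². -/
def pSR {n m : ℕ} (W P : Fin n → Fin m → ℝ) (i : Fin n) (j : Fin m) : ℝ :=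
  (∑ l, P i l * W i l) * (∑ k, P k j * W k j) / (wbar W P) ^ 2

/-- SR update: r·p^{SR}_{ij} + (1−r)·p^S_{ij}. -/
def SRupd {n m : ℕ} (W P : Fin n → Fin m → ℝ) (r : ℝ) (i : Fin n) (j : Fin m) : ℝ :=
  r * pSR W P i j + (1 - r) * pS W P i j

/-- Conditional expected fitness g_i(P) = Σ_j (p_{ij}/x_i(P)) w_{ij}. -/
def gcond {n m : ℕ} (W P : Fin n → Fin m → ℝ) (i : Fin n) : ℝ :=
  ∑ j, (P i j / xmarg P i) * W i j

/-- Marginal expected fitness G_i(P) = Σ_j y_j(P) w_{ij}. -/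
def Gmarg {n m : ℕ} (W P : Fin n → Fin m → ℝ) (i : Fin n) : ℝ :=
  ∑ j, ymarg P j * W i j

/-- Normalizer w̄^R(P) = Σ_{i,j} w_{ij}(r·x_i y_j + (1−r)·p_{ij}). -/
def wbarR {n m : ℕ} (W P : Fin n → Fin m → ℝ) (r : ℝ) : ℝ :=
  ∑ i, ∑ j, W i j * (r * xmarg P i * ymarg P j + (1 - r) * P i j)

/-- RS update: w_{ij}(r·x_i y_j + (1−r)·p_{ij}) / w̄^R(P). -/
def RSupd {n m : ℕ} (W P : Fin n → Fin m → ℝ) (r : ℝ) (i : Fin n) (j : Fin m) : ℝ :=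
  W i j * (r * xmarg P i * ymarg P j + (1 - r) * P i j) / wbarR W P r

/-- The SR dynamics leaves the Wright manifold, even under weak selection. -/
theorem sr_leaves_wright_manifold :
    ∀ s ∈ Set.Ioo (0 : ℝ) 1, ∀ r ∈ Set.Ioo (0 : ℝ) 1,
      ∃ W P : Fin 2 → Fin 2 → ℝ,
        IsFitness W ∧ (∀ i j, W i j ∈ Set.Icc (1 - s) (1 + s)) ∧
        IsPopDist P ∧ (∀ i j, P i j = xmarg P i * ymarg P j) ∧
        ∃ i j, SRupd W P r i j ≠
          (∑ j', SRupd W P r i j') * (∑ i', SRupd W P r i' j) := by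
  intro s hs r hr
  obtain ⟨hs0, hs1⟩ := hs
  obtain ⟨hr0, hr1⟩ := hr
  refine ⟨![![1+s,1],![1,1]], fun _ _ => 1/4, ?_, ?_, ?_, ?_, 0, 0, ?_⟩
  · intro i j; fin_cases i <;> fin_cases j <;> simp <;> linarith
  · intro i j; fin_cases i <;> fin_cases j <;>
      constructor <;> simp <;> linarith
  · constructor
    · intro i j; norm_num
    · simp [Fin.sum_univ_two]; norm_num
  · intro i j; simp [xmarg, ymarg, Fin.sum_univ_two]; norm_num
  · have h4 : (0:ℝ) < 4 + s := by linarith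
    have hwb : wbar ![![1+s,1],![1,1]] (fun _ _ => (1:ℝ)/4) = (4+s)/4 := by
      simp [wbar, Fin.sum_univ_two]; ring
    have hA : (∑ j', SRupd ![![1+s,1],![1,1]] (fun _ _ => (1:ℝ)/4) r 0 j') = (2+s)/(4+s) := by
      simp only [SRupd, pSR, pS, hwb, Fin.sum_univ_two, Matrix.cons_val_zero,
        Matrix.cons_val_one, Matrix.head_cons]
      field_simp
      ring
    have hB : (∑ i', SRupd ![![1+s,1],![1,1]] (fun _ _ => (1:ℝ)/4) r i' 0) = (2+s)/(4+s) := by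
      simp only [SRupd, pSR, pS, hwb, Fin.sum_univ_two, Matrix.cons_val_zero,
        Matrix.cons_val_one, Matrix.head_cons]
      field_simp
      ring
    have hC : SRupd ![![1+s,1],![1,1]] (fun _ _ => (1:ℝ)/4) r 0 0
        = r * (2+s)^2/(4+s)^2 + (1-r)*(1+s)/(4+s) := by
      simp only [SRupd, pSR, pS, hwb, Fin.sum_univ_two, Matrix.cons_val_zero,
        Matrix.cons_val_one, Matrix.head_cons]
      field_simp
      ring
    rw [hA, hB, hC]
    intro h
    field_simp at h
    have key : (4+s)^3 * ((1-r)*s) = 0 := by linear_combination (4+s)^3 * h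
    have : (0:ℝ) < (4+s)^3 * ((1-r)*s) :=
      mul_pos (pow_pos h4 3) (mul_pos (by linarith) hs0)
    linarith
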